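/- There exists a constant C > 0 such that for every integer m ≥ 3, the set of words w in L and R satisfying 3 ≤ tr(w) ≤ m is finite and has cardinality at most C · m² · log(m). -/

import Mathlib

/-- The matrix `L = [[1,1],[0,1]]`. -/
def Lmat : Matrix (Fin 2) (Fin 2) ℤ := !![1, 1; 0, 1]

/-- The matrix `R = [[1,0],[1,1]]`. -/
def Rmat : Matrix (Fin 2) (Fin 2) ℤ := !![1, 0; 1, 1]

/-- A word in the letters `L` and `R` is a list of booleans (`true` = `L`, `false` = `R`);
its matrix is the product of the corresponding matrices in order. -/
def wordMatrix (w : List Bool) : Matrix (Fin 2) (Fin 2) ℤ :=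
  (w.map fun b => if b then Lmat else Rmat).prod

lemma wm_nil : wordMatrix [] = 1 := rfl

lemma wm_cons (b : Bool) (w : List Bool) :
    wordMatrix (b :: w) = (if b then Lmat else Rmat) * wordMatrix w := by
  simp [wordMatrix]

lemma wm_nonneg (w : List Bool) (i j : Fin 2) : 0 ≤ wordMatrix w i j := by
  induction w generalizing i j with
  | nil => rw [wm_nil]; fin_cases i <;> fin_cases j <;> simp
  | cons b t ih =>
    rw [wm_cons, Matrix.mul_apply, Fin.sum_univ_two]
    cases b <;> fin_cases i <;> fin_cases j <;>
      simp [Lmat, Rmat] <;>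
      first | exact ih _ _ | exact add_nonneg (ih _ _) (ih _ _)

lemma wm_det (w : List Bool) : (wordMatrix w).det = 1 := by
  induction w with
  | nil => rw [wm_nil]; simp
  | cons b t ih =>
    rw [wm_cons, Matrix.det_mul, ih, mul_one]
    cases b <;> simp [Lmat, Rmat, Matrix.det_fin_two_of]

lemma wm_row0 (w : List Bool) : ∃ j, 0 < wordMatrix w 0 j := by
  by_contra h
  push_neg at h
  have h0 : wordMatrix w 0 0 = 0 := le_antisymm (h 0) (wm_nonneg w 0 0)
  have h1 : wordMatrix w 0 1 = 0 := le_antisymm (h 1) (wm_nonneg w 0 1)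
  have := wm_det w
  rw [Matrix.det_fin_two, h0, h1] at this
  simp at this

lemma wm_inj : Function.Injective wordMatrix := by
  intro w
  induction w with
  | nil =>
    intro w' h
    cases w' with
    | nil => rfl
    | cons b t =>
      exfalso
      rw [wm_nil, wm_cons] at h
      cases b with
      | true =>
        have h01 := congrFun (congrFun h 0) 1
        have h11 := congrFun (congrFun h 1) 1
        rw [Matrix.mul_apply, Fin.sum_univ_two] at h01 h11
        simp [Lmat, Matrix.one_apply] at h01 h11
        have := wm_nonneg t 0 1
        omega
      | false =>
        have h00 := congrFun (congrFun h 0) 0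
        have h10 := congrFun (congrFun h 1) 0
        rw [Matrix.mul_apply, Fin.sum_univ_two] at h00 h10
        simp [Rmat, Matrix.one_apply] at h00 h10
        have := wm_nonneg t 1 0
        omega
  | cons b t ih =>
    intro w' h
    cases w' with
    | nil =>
      exfalso
      rw [wm_nil, wm_cons] at h
      cases b with
      | true =>
        have h01 := congrFun (congrFun h 0) 1
        have h11 := congrFun (congrFun h 1) 1
        rw [Matrix.mul_apply, Fin.sum_univ_two] at h01 h11
        simp [Lmat, Matrix.one_apply] at h01 h11
        have := wm_nonneg t 0 1
        omega
      | false =>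
        have h00 := congrFun (congrFun h 0) 0
        have h10 := congrFun (congrFun h 1) 0
        rw [Matrix.mul_apply, Fin.sum_univ_two] at h00 h10
        simp [Rmat, Matrix.one_apply] at h00 h10
        have := wm_nonneg t 1 0
        omega
    | cons b' t' =>
      rw [wm_cons, wm_cons] at h
      -- first: b = b'
      have key : ∀ (u u' : List Bool),
          ¬ (Rmat * wordMatrix u = Lmat * wordMatrix u') := by
        intro u u' hh
        obtain ⟨j, hj⟩ := wm_row0 u'
        have h0 := congrFun (congrFun hh 0) j
        have h1 := congrFun (congrFun hh 1) j
        rw [Matrix.mul_apply, Fin.sum_univ_two, Matrix.mul_apply, Fin.sum_univ_two] at h0 h1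
        simp [Lmat, Rmat] at h0 h1
        have n1 := wm_nonneg u 1 j
        have n0 := wm_nonneg u' 1 j
        omega
      have hb : b = b' := by
        cases b <;> cases b'
        · rfl
        · exact absurd (show Rmat * wordMatrix t = Lmat * wordMatrix t' by simpa using h)
            (key t t')
        · exact absurd (show Rmat * wordMatrix t' = Lmat * wordMatrix t by simpa using h.symm)
            (key t' t)
        · rfl
      subst hb
      have ht : wordMatrix t = wordMatrix t' := by
        cases b with
        | true =>
          rw [if_pos rfl] at h
          have hinv : (!![1, -1; 0, 1] : Matrix (Fin 2) (Fin 2) ℤ) * Lmat = 1 := by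
            ext i j
            fin_cases i <;> fin_cases j <;>
              simp [Lmat, Matrix.mul_apply, Fin.sum_univ_two, Matrix.one_apply]
          calc wordMatrix t = (!![1, -1; 0, 1] * Lmat) * wordMatrix t := by rw [hinv, one_mul]
            _ = !![1, -1; 0, 1] * (Lmat * wordMatrix t) := by rw [mul_assoc]
            _ = !![1, -1; 0, 1] * (Lmat * wordMatrix t') := by rw [h]
            _ = (!![1, -1; 0, 1] * Lmat) * wordMatrix t' := by rw [mul_assoc]
            _ = wordMatrix t' := by rw [hinv, one_mul]
        | false =>
          have h : Rmat * wordMatrix t = Rmat * wordMatrix t' := by simpa using h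
          have hinv : (!![1, 0; -1, 1] : Matrix (Fin 2) (Fin 2) ℤ) * Rmat = 1 := by
            ext i j
            fin_cases i <;> fin_cases j <;>
              simp [Rmat, Matrix.mul_apply, Fin.sum_univ_two, Matrix.one_apply]
          calc wordMatrix t = (!![1, 0; -1, 1] * Rmat) * wordMatrix t := by rw [hinv, one_mul]
            _ = !![1, 0; -1, 1] * (Rmat * wordMatrix t) := by rw [mul_assoc]
            _ = !![1, 0; -1, 1] * (Rmat * wordMatrix t') := by rw [h]
            _ = (!![1, 0; -1, 1] * Rmat) * wordMatrix t' := by rw [mul_assoc]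
            _ = wordMatrix t' := by rw [hinv, one_mul]
      rw [ih ht]

lemma quad_core (a b c c' d d' : ℕ) (h1 : a * d = b * c + 1) (h1' : a * d' = b * c' + 1)
    (hb : 1 ≤ b) (hq : d / b = d' / b) : c = c' ∧ d = d' := by
  have hcop : Nat.gcd b a = 1 := by
    have hdvd1 : Nat.gcd b a ∣ a * d := Dvd.dvd.mul_right (Nat.gcd_dvd_right b a) d
    have hdvd2 : Nat.gcd b a ∣ b * c := Dvd.dvd.mul_right (Nat.gcd_dvd_left b a) c
    have hsub : a * d - b * c = 1 := by omega
    have := Nat.dvd_sub hdvd1 hdvd2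
    rw [hsub] at this
    exact Nat.dvd_one.mp this
  have m1 : a * d ≡ a * d' [MOD b] := by
    show a * d % b = a * d' % b
    rw [h1, h1', add_comm (b * c) 1, add_comm (b * c') 1,
      Nat.add_mul_mod_self_left, Nat.add_mul_mod_self_left]
  have m2 : d ≡ d' [MOD b] := m1.cancel_left_of_coprime hcop
  have hm : d % b = d' % b := m2
  have hd : d = d' := by
    rw [← Nat.div_add_mod d b, ← Nat.div_add_mod d' b, hq, hm]
  refine ⟨?_, hd⟩
  have : b * c = b * c' := by rw [hd] at h1; omega
  exact Nat.eq_of_mul_eq_mul_left hb this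

lemma quad_inj (a b c d a' b' c' d' : ℕ)
    (h1 : a * d = b * c + 1) (h1' : a' * d' = b' * c' + 1)
    (h3 : 3 ≤ a + d)
    (ha : a = a') (he : min b c = min b' c') (hf : (b ≤ c) ↔ (b' ≤ c'))
    (hq : d / min b c = d' / min b' c') :
    b = b' ∧ c = c' ∧ d = d' := by
  subst ha
  have hbc : 1 ≤ b * c := by
    rcases Nat.eq_zero_or_pos (b * c) with h0 | h0
    · rw [h0] at h1
      have ha1 : a = 1 := Nat.eq_one_of_mul_eq_one_right h1
      have hd1 : d = 1 := Nat.eq_one_of_mul_eq_one_left h1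
      omega
    · exact h0
  have hb1 : 1 ≤ b := Nat.pos_of_ne_zero fun h0 => by subst h0; simp at hbc
  have hc1 : 1 ≤ c := Nat.pos_of_ne_zero fun h0 => by subst h0; simp at hbc
  by_cases hcase : b ≤ c
  · have hcase' : b' ≤ c' := hf.mp hcase
    rw [min_eq_left hcase, min_eq_left hcase'] at he hq
    subst he
    obtain ⟨hc, hd⟩ := quad_core a b c c' d d' h1 h1' hb1 hq
    exact ⟨rfl, hc, hd⟩
  · have hcase' : ¬ (b' ≤ c') := fun hh => hcase (hf.mpr hh)
    rw [min_eq_right (le_of_not_ge hcase), min_eq_right (le_of_not_ge hcase')] at he hq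
    subst he
    rw [mul_comm b c] at h1
    rw [mul_comm b' c] at h1'
    obtain ⟨hbb, hd⟩ := quad_core a c b b' d d' h1 h1' hc1 hq
    exact ⟨hbb, rfl, hd⟩

/-- Natural-number entries of a word matrix. -/
def entN (w : List Bool) (i j : Fin 2) : ℕ := (wordMatrix w i j).toNat

lemma entN_eq (w : List Bool) (i j : Fin 2) : ((entN w i j : ℤ)) = wordMatrix w i j :=
  Int.toNat_of_nonneg (wm_nonneg w i j)

lemma wm_quad (w : List Bool) :
    entN w 0 0 * entN w 1 1 = entN w 0 1 * entN w 1 0 + 1 := by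
  have hdet := wm_det w
  rw [Matrix.det_fin_two] at hdet
  have e00 := entN_eq w 0 0
  have e01 := entN_eq w 0 1
  have e10 := entN_eq w 1 0
  have e11 := entN_eq w 1 1
  zify
  rw [e00, e01, e10, e11]
  linarith

lemma wm_tr (w : List Bool) :
    (wordMatrix w).trace = ((entN w 0 0 + entN w 1 1 : ℕ) : ℤ) := by
  rw [Matrix.trace_fin_two]
  push_cast
  rw [entN_eq, entN_eq]

/-- The injection used for counting. -/
def Fmap (w : List Bool) : ℕ × ℕ × Bool × ℕ :=
  (entN w 0 1 ⊓ entN w 1 0, entN w 0 0, decide (entN w 0 1 ≤ entN w 1 0),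
    entN w 1 1 / (entN w 0 1 ⊓ entN w 1 0))

lemma one_le_log_three : (1 : ℝ) ≤ Real.log 3 := by
  rw [Real.le_log_iff_exp_le (by norm_num)]
  have := Real.exp_one_lt_d9
  linarith

theorem count_words_of_bounded_trace :
    ∃ C : ℝ, 0 < C ∧ ∀ m : ℕ, 3 ≤ m →
      {w : List Bool | 3 ≤ (wordMatrix w).trace ∧ (wordMatrix w).trace ≤ (m : ℤ)}.Finite ∧
      ({w : List Bool | 3 ≤ (wordMatrix w).trace ∧ (wordMatrix w).trace ≤ (m : ℤ)}.ncard : ℝ)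
        ≤ C * (m : ℝ) ^ 2 * Real.log m := by
  refine ⟨100, by norm_num, ?_⟩
  intro m hm
  set S := {w : List Bool | 3 ≤ (wordMatrix w).trace ∧ (wordMatrix w).trace ≤ (m : ℤ)} with hS
  -- basic facts for elements of S
  have hfacts : ∀ w ∈ S, 3 ≤ entN w 0 0 + entN w 1 1 ∧ entN w 0 0 + entN w 1 1 ≤ m := by
    intro w hw
    obtain ⟨h3, hM⟩ := hw
    rw [wm_tr] at h3 hM
    exact ⟨by exact_mod_cast h3, by exact_mod_cast hM⟩
  -- target finset
  set T : Finset (ℕ × ℕ × Bool × ℕ) :=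
    (Finset.range (m+1)).biUnion (fun e =>
      {e} ×ˢ (Finset.range (m+1) ×ˢ ((Finset.univ : Finset Bool) ×ˢ Finset.range (m/e + 1))))
    with hT
  have hmaps : ∀ w ∈ S, Fmap w ∈ T := by
    intro w hw
    obtain ⟨h3, hle⟩ := hfacts w hw
    have hquad := wm_quad w
    have ham : entN w 0 0 ≤ m := by omega
    have hdm : entN w 1 1 ≤ m := by omega
    have hem : entN w 0 1 ⊓ entN w 1 0 ≤ m := by
      by_contra hcon
      push_neg at hcon
      have h1 : m < entN w 0 1 := lt_of_lt_of_le hcon (min_le_left _ _)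
      have h2 : m < entN w 1 0 := lt_of_lt_of_le hcon (min_le_right _ _)
      have hlt : m * m < entN w 0 1 * entN w 1 0 := by
        have hc : 0 < entN w 1 0 := by omega
        calc m * m ≤ m * entN w 1 0 := Nat.mul_le_mul_left m (le_of_lt h2)
          _ < entN w 0 1 * entN w 1 0 :=
              Nat.mul_lt_mul_of_lt_of_le h1 (le_refl _) hc
      have hgt : entN w 0 1 * entN w 1 0 < m * m + 1 := by
        calc entN w 0 1 * entN w 1 0 < entN w 0 1 * entN w 1 0 + 1 := Nat.lt_succ_self _
          _ = entN w 0 0 * entN w 1 1 := hquad.symm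
          _ ≤ m * m + 1 := by nlinarith
      omega
    rw [hT, Finset.mem_biUnion]
    refine ⟨entN w 0 1 ⊓ entN w 1 0, Finset.mem_range.mpr (by omega),
      Finset.mem_product.mpr ⟨Finset.mem_singleton.mpr rfl,
        Finset.mem_product.mpr ⟨Finset.mem_range.mpr (by show entN w 0 0 < m + 1; omega),
          Finset.mem_product.mpr ⟨Finset.mem_univ _, Finset.mem_range.mpr ?_⟩⟩⟩⟩
    show entN w 1 1 / (entN w 0 1 ⊓ entN w 1 0) < m / (entN w 0 1 ⊓ entN w 1 0) + 1
    exact Nat.lt_succ_of_le (Nat.div_le_div_right hdm)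
  have hinj : Set.InjOn Fmap S := by
    intro w hw w' hw' hF
    obtain ⟨h3, _⟩ := hfacts w hw
    have hquad := wm_quad w
    have hquad' := wm_quad w'
    rw [Fmap, Fmap, Prod.mk.injEq, Prod.mk.injEq, Prod.mk.injEq] at hF
    obtain ⟨he, ha, hf, hq⟩ := hF
    have hiff := decide_eq_decide.mp hf
    obtain ⟨hb, hc, hd⟩ := quad_inj (entN w 0 0) (entN w 0 1) (entN w 1 0) (entN w 1 1)
      (entN w' 0 0) (entN w' 0 1) (entN w' 1 0) (entN w' 1 1)
      hquad hquad' h3 ha he hiff hq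
    apply wm_inj
    have E : ∀ i j : Fin 2, entN w i j = entN w' i j → wordMatrix w i j = wordMatrix w' i j :=
      fun i j h => by rw [← entN_eq, ← entN_eq, h]
    ext i j
    fin_cases i <;> fin_cases j
    · exact E _ _ ha
    · exact E _ _ hb
    · exact E _ _ hc
    · exact E _ _ hd
  have himg : Fmap '' S ⊆ ↑T := by
    rintro _ ⟨w, hw, rfl⟩
    exact hmaps w hw
  have hfin : S.Finite :=
    Set.Finite.of_finite_image (T.finite_toSet.subset himg) hinj
  refine ⟨hfin, ?_⟩
  -- cardinality bound
  have hcard : S.ncard ≤ T.card := by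
    calc S.ncard = (Fmap '' S).ncard := (Set.ncard_image_of_injOn hinj).symm
      _ ≤ (↑T : Set (ℕ × ℕ × Bool × ℕ)).ncard :=
          Set.ncard_le_ncard himg T.finite_toSet
      _ = T.card := Set.ncard_coe_finset T
  have hTcard : T.card = ∑ e ∈ Finset.range (m+1), (m+1) * (2 * (m/e + 1)) := by
    rw [hT, Finset.card_biUnion]
    · apply Finset.sum_congr rfl
      intro e _
      simp [Finset.card_product]
    · intro i _ j _ hij
      rw [Function.onFun, Finset.disjoint_left]
      intro p hp hp'
      simp only [Finset.mem_product, Finset.mem_singleton] at hp hp'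
      exact hij (hp.1.symm.trans hp'.1)
  -- harmonic bound
  have hharm : (∑ e ∈ Finset.range (m+1), ((m / e : ℕ) : ℝ)) ≤ m * (1 + Real.log m) := by
    rw [Finset.sum_range_succ']
    simp only [Nat.div_zero, Nat.cast_zero, add_zero]
    have step1 : (∑ i ∈ Finset.range m, ((m / (i+1) : ℕ) : ℝ))
        ≤ ∑ i ∈ Finset.range m, (m : ℝ) / (i+1) := by
      apply Finset.sum_le_sum
      intro i _
      have := Nat.cast_div_le (α := ℝ) (m := m) (n := i+1)
      simpa using this
    have step2 : (∑ i ∈ Finset.range m, (m : ℝ) / (i+1)) = m * (harmonic m : ℝ) := by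
      rw [harmonic]
      push_cast
      rw [Finset.mul_sum]
      apply Finset.sum_congr rfl
      intro i _
      rw [div_eq_mul_inv]
    have step3 : (harmonic m : ℝ) ≤ 1 + Real.log m := harmonic_le_one_add_log m
    have hm0 : (0:ℝ) ≤ m := by positivity
    calc (∑ i ∈ Finset.range m, ((m / (i+1) : ℕ) : ℝ)) ≤ m * (harmonic m : ℝ) := by
          rw [← step2]; exact step1
      _ ≤ m * (1 + Real.log m) := by nlinarith
  -- final estimate
  have hlog : (1:ℝ) ≤ Real.log m := by
    calc (1:ℝ) ≤ Real.log 3 := one_le_log_three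
      _ ≤ Real.log m := Real.log_le_log (by norm_num) (by exact_mod_cast hm)
  have hm3 : (3:ℝ) ≤ (m:ℝ) := by exact_mod_cast hm
  calc (S.ncard : ℝ) ≤ (T.card : ℝ) := by exact_mod_cast hcard
    _ = ∑ e ∈ Finset.range (m+1), ((m:ℝ)+1) * (2 * (((m/e : ℕ) : ℝ) + 1)) := by
        rw [hTcard]; push_cast; rfl
    _ = ∑ e ∈ Finset.range (m+1), (2 * ((m:ℝ)+1) * ((m/e : ℕ) : ℝ) + 2 * ((m:ℝ)+1)) :=
        Finset.sum_congr rfl (fun e _ => by ring)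
    _ = 2 * ((m:ℝ)+1) * ((∑ e ∈ Finset.range (m+1), ((m/e : ℕ) : ℝ)) + (m+1)) := by
        rw [Finset.sum_add_distrib, ← Finset.mul_sum, Finset.sum_const, Finset.card_range,
          nsmul_eq_mul]
        push_cast
        ring
    _ ≤ 2 * ((m:ℝ)+1) * ((m * (1 + Real.log m)) + (m+1)) := by
        have h2 : (0:ℝ) ≤ 2 * ((m:ℝ)+1) := by positivity
        apply mul_le_mul_of_nonneg_left _ h2
        linarith [hharm]
    _ ≤ 100 * (m : ℝ) ^ 2 * Real.log m := by
        have hl0 : (0:ℝ) ≤ Real.log m := by linarith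
        have e1 : 4 * (m:ℝ)^2 ≤ 4 * (m:ℝ)^2 * Real.log m := by nlinarith
        have e2 : 6 * (m:ℝ) ≤ 2 * (m:ℝ)^2 * Real.log m := by nlinarith
        have e3 : 2 * (m:ℝ) * Real.log m ≤ (m:ℝ)^2 * Real.log m := by nlinarith
        have e4 : (2:ℝ) ≤ (m:ℝ)^2 * Real.log m := by nlinarith
        nlinarith [e1, e2, e3, e4]
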